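/- Let S be any set and let A = ℤ⟨S⟩ be the free associative unital ring on S (the free ℤ-algebra FreeAlgebra ℤ S). Let [A,A] ⊆ A be the additive subgroup generated by all commutators ab − ba (a, b ∈ A). Then the quotient abelian group A/[A,A] is torsion-free. In particular, every associative unital ring B admits a surjective ring homomorphism A′ → B from a ring A′ such that A′/[A′,A′] has no p-torsion for any prime p (take A′ the free ring on the underlying set of B). -/

import Mathlib

/-- The additive subgroup `[A, A] ⊆ A` generated by all commutators `a * b - b * a`. -/
def commutatorAddSubgroup (A : Type) [Ring A] : AddSubgroup A :=
  AddSubgroup.closure {x : A | ∃ a b : A, x = a * b - b * a}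

namespace Stmt9Aux

variable (S : Type)

/-- The set of cyclic words on `S`. -/
abbrev C : Type := Quotient (List.IsRotated.setoid S)

noncomputable def e : FreeAlgebra ℤ S ≃ₐ[ℤ] MonoidAlgebra ℤ (FreeMonoid S) :=
  FreeAlgebra.equivMonoidAlgebraFreeMonoid

/-- Send a word to its cyclic class. -/
def π : FreeMonoid S → C S := fun w => ⟦FreeMonoid.toList w⟧

lemma π_mul_comm (u v : FreeMonoid S) : π S (u * v) = π S (v * u) := by
  apply Quotient.sound
  show (FreeMonoid.toList (u * v)) ~r (FreeMonoid.toList (v * u))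
  rw [FreeMonoid.toList_mul, FreeMonoid.toList_mul]
  exact List.isRotated_append

/-- The additive map `ℤ⟨S⟩ → ⨁_{cyclic words} ℤ`. -/
noncomputable def φ : FreeAlgebra ℤ S →+ (C S →₀ ℤ) :=
  (Finsupp.mapDomain.addMonoidHom (π S)).comp
    (MonoidAlgebra.coeffAddEquiv.toAddMonoidHom.comp
      (e S : FreeAlgebra ℤ S →+* MonoidAlgebra ℤ (FreeMonoid S)).toAddMonoidHom)

lemma mapDomain_mul_comm (f g : MonoidAlgebra ℤ (FreeMonoid S)) :
    Finsupp.mapDomain (π S) (f * g).coeff = Finsupp.mapDomain (π S) (g * f).coeff := by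
  induction f using MonoidAlgebra.induction_linear with
  | zero => simp
  | add f₁ f₂ h1 h2 =>
    rw [add_mul, mul_add, MonoidAlgebra.coeff_add, MonoidAlgebra.coeff_add,
      Finsupp.mapDomain_add, Finsupp.mapDomain_add, h1, h2]
  | single u m =>
    induction g using MonoidAlgebra.induction_linear with
    | zero => simp
    | add g₁ g₂ h1 h2 =>
      rw [add_mul, mul_add, MonoidAlgebra.coeff_add, MonoidAlgebra.coeff_add,
        Finsupp.mapDomain_add, Finsupp.mapDomain_add, h1, h2]
    | single v n =>
      rw [MonoidAlgebra.single_mul_single, MonoidAlgebra.single_mul_single,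
        MonoidAlgebra.coeff_single, MonoidAlgebra.coeff_single, Finsupp.mapDomain_single, Finsupp.mapDomain_single, π_mul_comm, mul_comm m n]

lemma comm_le_ker : commutatorAddSubgroup (FreeAlgebra ℤ S) ≤ (φ S).ker := by
  rw [commutatorAddSubgroup, AddSubgroup.closure_le]
  rintro x ⟨a, b, rfl⟩
  have : φ S (a * b) = φ S (b * a) := by
    show Finsupp.mapDomain (π S) ((e S) (a * b)).coeff =
      Finsupp.mapDomain (π S) ((e S) (b * a)).coeff
    rw [map_mul, map_mul]
    exact mapDomain_mul_comm S _ _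
  simp [AddMonoidHom.mem_ker, map_sub, this]

noncomputable def φbar :
    (FreeAlgebra ℤ S ⧸ commutatorAddSubgroup (FreeAlgebra ℤ S)) →+ (C S →₀ ℤ) :=
  QuotientAddGroup.lift _ (φ S) (comm_le_ker S)

lemma mk_append_comm (a b : List S) :
    (QuotientAddGroup.mk ((e S).symm (MonoidAlgebra.single (FreeMonoid.ofList (a ++ b)) 1)) :
        FreeAlgebra ℤ S ⧸ commutatorAddSubgroup (FreeAlgebra ℤ S)) =
      QuotientAddGroup.mk ((e S).symm (MonoidAlgebra.single (FreeMonoid.ofList (b ++ a)) 1)) := by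
  set p := (e S).symm (MonoidAlgebra.single (FreeMonoid.ofList a) 1)
  set q := (e S).symm (MonoidAlgebra.single (FreeMonoid.ofList b) 1)
  have key : ∀ x y : List S, (MonoidAlgebra.single (FreeMonoid.ofList (x ++ y)) (1 : ℤ) :
      MonoidAlgebra ℤ (FreeMonoid S)) =
      MonoidAlgebra.single (FreeMonoid.ofList x) 1 *
        MonoidAlgebra.single (FreeMonoid.ofList y) 1 := by
    intro x y
    rw [MonoidAlgebra.single_mul_single, one_mul, FreeMonoid.ofList_append]
  have h1 : (e S).symm (MonoidAlgebra.single (FreeMonoid.ofList (a ++ b)) 1) = p * q := by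
    rw [key, map_mul]
  have h2 : (e S).symm (MonoidAlgebra.single (FreeMonoid.ofList (b ++ a)) 1) = q * p := by
    rw [key, map_mul]
  rw [h1, h2, QuotientAddGroup.eq]
  have : -(p * q) + q * p = q * p - p * q := by abel
  rw [this]
  exact AddSubgroup.subset_closure ⟨q, p, rfl⟩

lemma ψfun_wd (u v : List S) (h : u ~r v) :
    (QuotientAddGroup.mk ((e S).symm (MonoidAlgebra.single (FreeMonoid.ofList u) 1)) :
        FreeAlgebra ℤ S ⧸ commutatorAddSubgroup (FreeAlgebra ℤ S)) =
      QuotientAddGroup.mk ((e S).symm (MonoidAlgebra.single (FreeMonoid.ofList v) 1)) := by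
  obtain ⟨n, rfl⟩ := h
  rcases eq_or_ne u [] with rfl | hu
  · simp
  · have hlen : 0 < u.length := List.length_pos_iff.2 hu
    have h1 : u.rotate n = u.rotate (n % u.length) := (List.rotate_mod u n).symm
    have h2 : u.rotate (n % u.length) =
        u.drop (n % u.length) ++ u.take (n % u.length) :=
      List.rotate_eq_drop_append_take (Nat.mod_lt _ hlen).le
    rw [h1, h2]
    conv_lhs => rw [← List.take_append_drop (n % u.length) u]
    exact mk_append_comm S _ _

/-- The retraction on cyclic classes. -/
noncomputable def ψfun : C S → FreeAlgebra ℤ S ⧸ commutatorAddSubgroup (FreeAlgebra ℤ S) :=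
  Quotient.lift
    (fun w => QuotientAddGroup.mk ((e S).symm (MonoidAlgebra.single (FreeMonoid.ofList w) 1)))
    (ψfun_wd S)

noncomputable def ψ :
    (C S →₀ ℤ) →+ (FreeAlgebra ℤ S ⧸ commutatorAddSubgroup (FreeAlgebra ℤ S)) :=
  Finsupp.liftAddHom (fun c => zmultiplesHom _ (ψfun S c))

lemma ψ_mapDomain (f : MonoidAlgebra ℤ (FreeMonoid S)) :
    ψ S (Finsupp.mapDomain (π S) f.coeff) = QuotientAddGroup.mk ((e S).symm f) := by
  induction f using MonoidAlgebra.induction_linear with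
  | zero => simp
  | add f₁ f₂ h1 h2 => rw [MonoidAlgebra.coeff_add, Finsupp.mapDomain_add, map_add, h1, h2, map_add]; rfl
  | single w n =>
    rw [MonoidAlgebra.coeff_single, Finsupp.mapDomain_single]
    show ψ S (Finsupp.single (π S w) n) = _
    rw [ψ, Finsupp.liftAddHom_apply_single]
    show n • ψfun S (π S w) = _
    have : ψfun S (π S w) =
        QuotientAddGroup.mk ((e S).symm (MonoidAlgebra.single w 1)) := by
      show QuotientAddGroup.mk
        ((e S).symm (MonoidAlgebra.single (FreeMonoid.ofList (FreeMonoid.toList w)) 1)) = _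
      rw [FreeMonoid.ofList_toList]
    rw [this]
    have : n • (QuotientAddGroup.mk ((e S).symm (MonoidAlgebra.single w 1)) :
        FreeAlgebra ℤ S ⧸ commutatorAddSubgroup (FreeAlgebra ℤ S)) =
        QuotientAddGroup.mk (n • ((e S).symm (MonoidAlgebra.single w 1))) := rfl
    rw [this, ← map_zsmul, MonoidAlgebra.smul_single, smul_eq_mul, mul_one]

lemma retract (x : FreeAlgebra ℤ S ⧸ commutatorAddSubgroup (FreeAlgebra ℤ S)) :
    ψ S (φbar S x) = x := by
  induction x using QuotientAddGroup.induction_on with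
  | H a =>
    have : φbar S (QuotientAddGroup.mk a) = φ S a := rfl
    rw [this]
    have : φ S a = Finsupp.mapDomain (π S) ((e S) a).coeff := rfl
    rw [this, ψ_mapDomain, AlgEquiv.symm_apply_apply]

lemma torsion_free (x : FreeAlgebra ℤ S ⧸ commutatorAddSubgroup (FreeAlgebra ℤ S))
    (n : ℕ) (hn : n ≠ 0) (h : n • x = 0) : x = 0 := by
  have h1 : n • φbar S x = 0 := by rw [← map_nsmul, h, map_zero]
  have h2 : φbar S x = 0 := by
    ext c
    have := DFunLike.congr_fun h1 c
    simp only [Finsupp.coe_smul, Pi.smul_apply, smul_eq_mul, Finsupp.coe_zero,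
      Pi.zero_apply, nsmul_eq_mul] at this ⊢
    exact (mul_eq_zero.1 this).resolve_left (by exact_mod_cast hn)
  rw [← retract S x, h2, map_zero]

end Stmt9Aux

/-- For the free associative unital ring `A = ℤ⟨S⟩`, the quotient abelian group
`A / [A, A]` is torsion-free; in particular, every associative unital ring `B` is a
surjective image of a ring `A'` (the free ring on the underlying set of `B`) such
that `A' / [A', A']` has no `p`-torsion for any prime `p`. -/
theorem stmt_9 (S : Type) :
    (∀ (x : FreeAlgebra ℤ S ⧸ commutatorAddSubgroup (FreeAlgebra ℤ S)) (n : ℕ),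
      n ≠ 0 → n • x = 0 → x = 0) ∧
    (∀ (B : Type) [Ring B], ∃ φ : FreeAlgebra ℤ B →+* B,
      Function.Surjective φ ∧
      ∀ (x : FreeAlgebra ℤ B ⧸ commutatorAddSubgroup (FreeAlgebra ℤ B)) (n : ℕ),
        n ≠ 0 → n • x = 0 → x = 0) := by
  refine ⟨fun x n hn h => Stmt9Aux.torsion_free S x n hn h, fun B _ => ?_⟩
  refine ⟨(FreeAlgebra.lift ℤ (id : B → B)).toRingHom, ?_,
    fun x n hn h => Stmt9Aux.torsion_free B x n hn h⟩
  intro b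
  exact ⟨FreeAlgebra.ι ℤ b, by simp⟩
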